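/- Dyson's identity: for bounded linear operators L on a Banach space and a projection-type bounded operator decomposition L = PL + QL, one has exp(tL) = exp(tQL) + ∫₀ᵗ exp((t−τ)L) ∘ (PL) ∘ exp(τQL) dτ for all t ≥ 0. -/

import Mathlib

open NormedSpace

/-- Dyson's identity: for bounded operators `L, P, Q` on a Banach space with `P + Q = 1`,
`exp (tL) = exp (tQL) + ∫₀ᵗ exp ((t−τ)L) (PL) exp (τQL) dτ` for all `t ≥ 0`. -/
theorem dyson_identity {X : Type*} [NormedAddCommGroup X] [NormedSpace ℝ X]
    [CompleteSpace X] (L P Q : X →L[ℝ] X) (hPQ : P + Q = 1) :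
    ∀ t : ℝ, 0 ≤ t →
      exp (t • L) =
        exp (t • (Q * L)) +
          ∫ τ in (0:ℝ)..t, exp ((t - τ) • L) * (P * L) * exp (τ • (Q * L)) := by
  intro t ht
  have hL : P * L + Q * L = L := by rw [← add_mul, hPQ, one_mul]
  set F : ℝ → (X →L[ℝ] X) := fun τ => exp ((t - τ) • L) * exp (τ • (Q * L)) with hF
  set G : ℝ → (X →L[ℝ] X) :=
    fun τ => exp ((t - τ) • L) * (P * L) * exp (τ • (Q * L)) with hG
  have hderiv : ∀ τ : ℝ, HasDerivAt F (-(G τ)) τ := by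
    intro τ
    have h1 : HasDerivAt (fun τ : ℝ => exp ((t - τ) • L))
        ((-1 : ℝ) • (exp ((t - τ) • L) * L)) τ := by
      have hinner : HasDerivAt (fun τ : ℝ => t - τ) (-1 : ℝ) τ := by
        simpa using (hasDerivAt_id τ).const_sub t
      exact (hasDerivAt_exp_smul_const (𝕂 := ℝ) L (t - τ)).scomp τ hinner
    have h2 : HasDerivAt (fun τ : ℝ => exp (τ • (Q * L)))
        ((Q * L) * exp (τ • (Q * L))) τ := hasDerivAt_exp_smul_const' (Q * L) τ
    have h3 := h1.mul h2
    have heq : -(G τ) = (-1 : ℝ) • (exp ((t - τ) • L) * L) * exp (τ • (Q * L)) +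
        exp ((t - τ) • L) * (Q * L * exp (τ • (Q * L))) := by
      simp only [hG]
      rw [neg_one_smul, eq_sub_of_add_eq hL]
      noncomm_ring
    rw [heq]
    exact h3
  have hcont : Continuous G := by
    apply Continuous.mul
    · apply Continuous.mul
      · exact (continuous_iff_continuousAt.2 fun x => (exp_analytic (𝕂 := ℝ) x).continuousAt).comp ((continuous_const.sub continuous_id).smul continuous_const)
      · exact continuous_const
    · exact (continuous_iff_continuousAt.2 fun x => (exp_analytic (𝕂 := ℝ) x).continuousAt).comp (continuous_id.smul continuous_const)
  have hint : IntervalIntegrable (fun τ => -(G τ)) MeasureTheory.volume 0 t :=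
    hcont.neg.intervalIntegrable 0 t
  have hmain := intervalIntegral.integral_eq_sub_of_hasDerivAt
    (f := F) (f' := fun τ => -(G τ)) (fun τ _ => hderiv τ) hint
  rw [intervalIntegral.integral_neg] at hmain
  have hFt : F t = exp (t • (Q * L)) := by
    simp [hF]
  have hF0 : F 0 = exp (t • L) := by
    simp [hF]
  rw [hFt, hF0] at hmain
  have : (∫ τ in (0:ℝ)..t, G τ) = exp (t • L) - exp (t • (Q * L)) := by
    have := neg_eq_iff_eq_neg.mp hmain
    rw [this]; abel
  rw [this]; abel
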